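/- For every integer n, the product of the bicomplex Pell number BP(n) with its j-conjugate satisfies BP(n) · (BP(n))*_j = (P(n)² − P(n+1)² + P(n+2)² − P(n+3)²)·1 + 4·(P(2n+3) + P(n)·P(n+1))·i. -/

import Mathlib

open scoped TensorProduct

noncomputable def bi : ℂ ⊗[ℝ] ℂ := Complex.I ⊗ₜ[ℝ] 1
noncomputable def bj : ℂ ⊗[ℝ] ℂ := (1 : ℂ) ⊗ₜ[ℝ] Complex.I
noncomputable def bij : ℂ ⊗[ℝ] ℂ := Complex.I ⊗ₜ[ℝ] Complex.I

/-- The bicomplex Pell number `BP n = P n + P (n+1) i + P (n+2) j + P (n+3) ij`. -/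
noncomputable def BP (P : ℤ → ℤ) (n : ℤ) : ℂ ⊗[ℝ] ℂ :=
  (P n : ℝ) • (1 : ℂ ⊗[ℝ] ℂ) + (P (n + 1) : ℝ) • bi + (P (n + 2) : ℝ) • bj +
    (P (n + 3) : ℝ) • bij

/-- The j-conjugate of the bicomplex Pell number. -/
noncomputable def BPconjJ (P : ℤ → ℤ) (n : ℤ) : ℂ ⊗[ℝ] ℂ :=
  (P n : ℝ) • (1 : ℂ ⊗[ℝ] ℂ) + (P (n + 1) : ℝ) • bi - (P (n + 2) : ℝ) • bj -
    (P (n + 3) : ℝ) • bij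

section Aux

lemma one_def' : (1 : ℂ ⊗[ℝ] ℂ) = (1:ℂ) ⊗ₜ[ℝ] (1:ℂ) := rfl

lemma hbi : bi * bi = -1 := by
  simp [bi, Algebra.TensorProduct.tmul_mul_tmul, Complex.I_mul_I, TensorProduct.neg_tmul,
    TensorProduct.tmul_neg, one_def']

lemma hbj : bj * bj = -1 := by
  simp [bj, Algebra.TensorProduct.tmul_mul_tmul, Complex.I_mul_I, TensorProduct.neg_tmul,
    TensorProduct.tmul_neg, one_def']

lemma hbibj : bi * bj = bij := by
  simp [bi, bj, bij, Algebra.TensorProduct.tmul_mul_tmul]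

lemma hbijbij : bij * bij = 1 := by
  simp [bij, Algebra.TensorProduct.tmul_mul_tmul, Complex.I_mul_I, TensorProduct.neg_tmul,
    TensorProduct.tmul_neg, one_def']

lemma hbibij : bi * bij = -bj := by
  simp [bi, bj, bij, Algebra.TensorProduct.tmul_mul_tmul, Complex.I_mul_I,
    TensorProduct.neg_tmul, TensorProduct.tmul_neg]

lemma hbjbij : bj * bij = -bi := by
  simp [bi, bj, bij, Algebra.TensorProduct.tmul_mul_tmul, Complex.I_mul_I,
    TensorProduct.neg_tmul, TensorProduct.tmul_neg]

lemma hbjbi : bj * bi = bij := by rw [mul_comm]; exact hbibj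
lemma hbijbi : bij * bi = -bj := by rw [mul_comm]; exact hbibij
lemma hbijbj : bij * bj = -bi := by rw [mul_comm]; exact hbjbij

lemma prod_formula (a b c d : ℝ) :
    (a • (1:ℂ ⊗[ℝ] ℂ) + b • bi + c • bj + d • bij) *
      (a • (1:ℂ ⊗[ℝ] ℂ) + b • bi - c • bj - d • bij) =
    (a^2 - b^2 + c^2 - d^2) • (1:ℂ ⊗[ℝ] ℂ) + (2*a*b + 2*c*d) • bi := by
  simp only [mul_add, add_mul, mul_sub, sub_mul, smul_mul_smul_comm, hbi, hbj, hbibj, hbijbij,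
    hbibij, hbjbij, hbjbi, hbijbi, hbijbj, one_mul, mul_one, smul_neg]
  module

/-- The combined pair of Pell "double-argument" identities. -/
def pellC (P : ℤ → ℤ) (n : ℤ) : Prop :=
  P (2*n+1) = P (n+1)^2 + P n^2 ∧ P (2*n+2) = P (n+1) * (P (n+2) + P n)

variable (P : ℤ → ℤ) (hP : ∀ n : ℤ, P (n + 2) = 2 * P (n + 1) + P n)

include hP in
lemma pell_stepF (n : ℤ) (h : pellC P n) : pellC P (n+1) := by
  obtain ⟨hA, hB⟩ := h
  have h1 : P (2*n+3) = 2 * P (2*n+2) + P (2*n+1) := by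
    have := hP (2*n+1)
    rw [show (2*n+1)+2 = 2*n+3 from by ring, show (2*n+1)+1 = 2*n+2 from by ring] at this
    exact this
  have h2 : P (2*n+4) = 2 * P (2*n+3) + P (2*n+2) := by
    have := hP (2*n+2)
    rw [show (2*n+2)+2 = 2*n+4 from by ring, show (2*n+2)+1 = 2*n+3 from by ring] at this
    exact this
  have r0 := hP n
  have r1 : P (n+3) = 2 * P (n+2) + P (n+1) := by
    have := hP (n+1)
    rw [show (n+1)+2 = n+3 from by ring, show (n+1)+1 = n+2 from by ring] at this
    exact this
  unfold pellC
  rw [show 2*(n+1)+1 = 2*n+3 from by ring, show 2*(n+1)+2 = 2*n+4 from by ring,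
    show n+1+1 = n+2 from by ring, show n+1+2 = n+3 from by ring]
  constructor
  · rw [h1, hB, hA, r0]; ring
  · rw [h2, h1, hB, hA, r1, r0]; ring

include hP in
lemma pell_stepB (n : ℤ) (h : pellC P (n+1)) : pellC P n := by
  have h1 : P (2*n+3) = 2 * P (2*n+2) + P (2*n+1) := by
    have := hP (2*n+1)
    rw [show (2*n+1)+2 = 2*n+3 from by ring, show (2*n+1)+1 = 2*n+2 from by ring] at this
    exact this
  have h2 : P (2*n+4) = 2 * P (2*n+3) + P (2*n+2) := by
    have := hP (2*n+2)
    rw [show (2*n+2)+2 = 2*n+4 from by ring, show (2*n+2)+1 = 2*n+3 from by ring] at this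
    exact this
  have r0 := hP n
  have r1 : P (n+3) = 2 * P (n+2) + P (n+1) := by
    have := hP (n+1)
    rw [show (n+1)+2 = n+3 from by ring, show (n+1)+1 = n+2 from by ring] at this
    exact this
  unfold pellC at h ⊢
  rw [show 2*(n+1)+1 = 2*n+3 from by ring, show 2*(n+1)+2 = 2*n+4 from by ring,
    show n+1+1 = n+2 from by ring, show n+1+2 = n+3 from by ring] at h
  obtain ⟨hA, hB⟩ := h
  have g1 : P (2*n+1) = 5*P (2*n+3) - 2*P (2*n+4) := by linarith
  have g2 : P (2*n+2) = P (2*n+4) - 2*P (2*n+3) := by linarith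
  constructor
  · rw [g1, hA, hB, r1, r0]; ring
  · rw [g2, hB, hA, r1, r0]; ring

include hP in
lemma pellC_all (hP0 : P 0 = 0) (hP1 : P 1 = 1) : ∀ n : ℤ, pellC P n := by
  intro n
  induction n using Int.induction_on with
  | zero =>
    have h2 := hP 0
    have h3 := hP 1
    norm_num [pellC, hP0, hP1] at h2 h3 ⊢
  | succ i ih => exact pell_stepF P hP i ih
  | pred i ih =>
    apply pell_stepB P hP
    rw [show (-(i:ℤ)-1)+1 = -(i:ℤ) from by ring]
    exact ih

end Aux

theorem bicomplexPell_mul_conjJ (P : ℤ → ℤ)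
    (hP : ∀ n : ℤ, P (n + 2) = 2 * P (n + 1) + P n) (hP0 : P 0 = 0) (hP1 : P 1 = 1)
    (n : ℤ) :
    BP P n * BPconjJ P n =
      ((P n : ℝ) ^ 2 - (P (n + 1) : ℝ) ^ 2 + (P (n + 2) : ℝ) ^ 2 - (P (n + 3) : ℝ) ^ 2) •
          (1 : ℂ ⊗[ℝ] ℂ) +
        (4 * ((P (2 * n + 3) : ℝ) + (P n : ℝ) * (P (n + 1) : ℝ))) • bi := by
  have hC := pellC_all P hP hP0 hP1 (n+1)
  have hA : P (2*n+3) = P (n+2)^2 + P (n+1)^2 := by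
    have := hC.1
    rw [show 2*(n+1)+1 = 2*n+3 from by ring, show n+1+1 = n+2 from by ring] at this
    exact this
  have r0 := hP n
  have r1 : P (n+3) = 2 * P (n+2) + P (n+1) := by
    have := hP (n+1)
    rw [show (n+1)+2 = n+3 from by ring, show (n+1)+1 = n+2 from by ring] at this
    exact this
  have keyZ : P (n+2) * P (n+3) - P n * P (n+1) = 2 * P (2*n+3) := by
    rw [hA, r1, r0]; ring
  have keyR : (P (n+2) : ℝ) * (P (n+3) : ℝ) - (P n : ℝ) * (P (n+1) : ℝ)
      = 2 * (P (2*n+3) : ℝ) := by exact_mod_cast keyZ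
  rw [BP, BPconjJ, prod_formula]
  match_scalars
  · ring
  · linear_combination (2:ℝ) * keyR
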